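/- arXiv:2102.00936 — 5 statements merged into one kernel-verified Lean document; each statement's English description precedes it below -/
import Mathlib

section
/- Let M be a commutative monoid and I the augmentation ideal of ℤ[M]. Then I^{n+1} is generated as an abelian group by the elements x · (m_0 - 1)(m_1 - 1)⋯(m_n - 1) for x, m_0, …, m_n ∈ M. -/
/-- The augmentation ideal of the monoid ring `ℤ[M]`: the kernel of the ring map
`ℤ[M] → ℤ` sending every `m ∈ M` to `1`. -/
noncomputable def augIdeal (M : Type*) [CommMonoid M] : Ideal (MonoidAlgebra ℤ M) :=
  RingHom.ker ((MonoidAlgebra.lift ℤ ℤ M) 1)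

namespace AugAux

open MonoidAlgebra Submodule

variable (M : Type*) [CommMonoid M]

/-- The generating set. -/
def genSet (n : ℕ) : Set (MonoidAlgebra ℤ M) :=
  {z : MonoidAlgebra ℤ M |
    ∃ (x : M) (m : Fin (n + 1) → M),
      z = MonoidAlgebra.of ℤ M x * ∏ i, (MonoidAlgebra.of ℤ M (m i) - 1)}

variable {M}

lemma of_mul_mem_span {n : ℕ} (y : M) {a : MonoidAlgebra ℤ M}
    (ha : a ∈ span ℤ (genSet M n)) : MonoidAlgebra.of ℤ M y * a ∈ span ℤ (genSet M n) := by
  induction ha using Submodule.span_induction with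
  | mem z hz =>
      obtain ⟨x, m, rfl⟩ := hz
      refine subset_span ⟨y * x, m, ?_⟩
      rw [← mul_assoc, ← map_mul]
  | zero => simp
  | add a b _ _ h1 h2 => rw [mul_add]; exact add_mem h1 h2
  | smul c a _ h => rw [mul_smul_comm]; exact smul_mem _ _ h

lemma sub_one_mem_aug (m : M) : MonoidAlgebra.of ℤ M m - 1 ∈ augIdeal M := by
  simp [augIdeal, RingHom.mem_ker, map_sub]

lemma prod_sub_one_mem {n : ℕ} (m : Fin (n + 1) → M) :
    ∏ i, (MonoidAlgebra.of ℤ M (m i) - 1) ∈ augIdeal M ^ (n + 1) := by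
  have h : ∏ i : Fin (n + 1), (MonoidAlgebra.of ℤ M (m i) - 1) ∈
      ∏ _i : Fin (n + 1), augIdeal M :=
    Ideal.prod_mem_prod fun i _ => sub_one_mem_aug (m i)
  simpa using h

lemma span_le_pow (n : ℕ) :
    span ℤ (genSet M n) ≤ restrictScalars ℤ (augIdeal M ^ (n + 1)) := by
  rw [span_le]
  rintro z ⟨x, m, rfl⟩
  exact Ideal.mul_mem_left _ _ (prod_sub_one_mem m)

lemma base_case {f : MonoidAlgebra ℤ M} (hf : f ∈ augIdeal M) :
    f ∈ span ℤ (genSet M 0) := by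
  have hsum : (f.coeff.sum fun _ b => b) = 0 := by
    have := hf
    rw [augIdeal, RingHom.mem_ker, MonoidAlgebra.lift_apply] at this
    simpa using this
  have h1 : ∑ m ∈ f.coeff.support, f.coeff m • (MonoidAlgebra.of ℤ M m) = f := by
    conv_rhs => rw [← MonoidAlgebra.sum_coeff_single f]
    rw [Finsupp.sum]
    exact Finset.sum_congr rfl fun m _ => by
      simp [MonoidAlgebra.of_apply, Finsupp.smul_single']
  have h2 : ∑ m ∈ f.coeff.support, f.coeff m • (1 : MonoidAlgebra ℤ M) = 0 := by
    rw [← Finset.sum_smul]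
    have : ∑ m ∈ f.coeff.support, f.coeff m = 0 := by simpa [Finsupp.sum] using hsum
    rw [this, zero_smul]
  have hrepr : f = ∑ m ∈ f.coeff.support, f.coeff m • (MonoidAlgebra.of ℤ M m - 1) := by
    simp only [smul_sub]
    rw [Finset.sum_sub_distrib, h1, h2, sub_zero]
  rw [hrepr]
  refine Submodule.sum_mem _ fun m _ => Submodule.smul_mem _ _ (subset_span ?_)
  refine ⟨1, fun _ => m, ?_⟩
  simp [← MonoidAlgebra.one_def]

lemma mul_step {n : ℕ} {a b : MonoidAlgebra ℤ M}
    (ha : a ∈ span ℤ (genSet M n)) (hb : b ∈ span ℤ (genSet M 0)) :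
    a * b ∈ span ℤ (genSet M (n + 1)) := by
  induction ha using Submodule.span_induction with
  | mem z hz =>
      obtain ⟨x, m, rfl⟩ := hz
      induction hb using Submodule.span_induction with
      | mem w hw =>
          obtain ⟨y, m', rfl⟩ := hw
          refine subset_span ⟨x * y, Fin.snoc m (m' 0), ?_⟩
          conv_rhs => rw [Fin.prod_univ_castSucc]
          simp only [Fin.snoc_castSucc, Fin.snoc_last, map_mul, Fin.prod_univ_succ, Fin.prod_univ_zero, mul_one]
          ring
      | zero => simp
      | add u v _ _ h1 h2 => rw [mul_add]; exact add_mem h1 h2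
      | smul c u _ h => rw [mul_smul_comm]; exact smul_mem _ _ h
  | zero => simp
  | add u v _ _ h1 h2 => rw [add_mul]; exact add_mem h1 h2
  | smul c u _ h => rw [smul_mul_assoc]; exact smul_mem _ _ h

lemma pow_le_span : ∀ n : ℕ, ∀ f ∈ augIdeal M ^ (n + 1), f ∈ span ℤ (genSet M n) := by
  intro n
  induction n with
  | zero => intro f hf; rw [pow_one] at hf; exact base_case hf
  | succ k ih =>
      intro f hf
      rw [pow_succ] at hf
      exact Submodule.mul_induction_on hf
        (fun a ha b hb => mul_step (ih a ha) (base_case hb))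
        (fun a b h1 h2 => add_mem h1 h2)

lemma span_eq (n : ℕ) :
    span ℤ (genSet M n) = restrictScalars ℤ (augIdeal M ^ (n + 1)) :=
  le_antisymm (span_le_pow n) (fun f hf => pow_le_span n f hf)

end AugAux

/-- The `(n+1)`st power of the augmentation ideal `I ⊆ ℤ[M]` is generated as an abelian group
by the elements `x · (m₀ - 1)(m₁ - 1)⋯(mₙ - 1)` for `x, m₀, …, mₙ ∈ M`. -/
theorem augIdeal_pow_eq_addSubgroup_closure (M : Type*) [CommMonoid M] (n : ℕ) :
    (augIdeal M ^ (n + 1)).toAddSubgroup =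
      AddSubgroup.closure {z : MonoidAlgebra ℤ M |
        ∃ (x : M) (m : Fin (n + 1) → M),
          z = MonoidAlgebra.of ℤ M x * ∏ i, (MonoidAlgebra.of ℤ M (m i) - 1)} := by
  rw [← Submodule.span_int_eq_addSubgroupClosure]
  have h := AugAux.span_eq (M := M) n
  ext z
  constructor
  · intro hz
    have : z ∈ Submodule.restrictScalars ℤ (augIdeal M ^ (n + 1)) := hz
    rw [← h] at this
    exact this
  · intro hz
    have : z ∈ Submodule.span ℤ (AugAux.genSet M n) := hz
    rw [h] at this
    exact this
end

section
/- Let M be a commutative monoid with group completion i: M → M⁺. Then the induced ring homomorphism ℤ[M]/I_M^{n+1} → ℤ[M⁺]/I_{M⁺}^{n+1} is an isomorphism, where I_M and I_{M⁺} denote the respective augmentation ideals. -/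
/-- `i : M →* G` is a group completion of the commutative monoid `M` if every monoid
homomorphism from `M` to a commutative group factors uniquely through `i`. -/
def IsGroupCompletion {M G : Type} [CommMonoid M] [CommGroup G] (i : M →* G) : Prop :=
  ∀ (H : Type) [CommGroup H] (φ : M →* H), ∃! ψ : G →* H, ψ.comp i = φ

open MonoidAlgebra

lemma aug_single {M : Type*} [CommMonoid M] (m : M) (r : ℤ) :
    (MonoidAlgebra.lift ℤ ℤ M) 1 (single m r) = r := by
  rw [MonoidAlgebra.lift_single]; simp

lemma of_sub_one_mem {M : Type*} [CommMonoid M] (m : M) :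
    (MonoidAlgebra.of ℤ M) m - 1 ∈ augIdeal M := by
  have h1 : (MonoidAlgebra.lift ℤ ℤ M) 1 ((MonoidAlgebra.of ℤ M) m) = 1 := by
    rw [MonoidAlgebra.of_apply]; simpa using aug_single m 1
  simp [augIdeal, RingHom.mem_ker, map_sub, h1]


set_option maxHeartbeats 1000000 in
/-- If `i : M → M⁺` is the group completion of a commutative monoid `M`, then the induced
ring homomorphism `ℤ[M]/I_M^{n+1} → ℤ[M⁺]/I_{M⁺}^{n+1}` is an isomorphism. -/
theorem monoidAlgebra_quotient_iso_of_group_completion {M G : Type} [CommMonoid M]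
    [CommGroup G] (i : M →* G) (hi : IsGroupCompletion i) (n : ℕ) :
    ∃ ψ : MonoidAlgebra ℤ M ⧸ augIdeal M ^ (n + 1) →+*
        MonoidAlgebra ℤ G ⧸ augIdeal G ^ (n + 1),
      ψ.comp (Ideal.Quotient.mk (augIdeal M ^ (n + 1))) =
          (Ideal.Quotient.mk (augIdeal G ^ (n + 1))).comp
            (MonoidAlgebra.mapDomainRingHom ℤ i) ∧
        Function.Bijective ψ := by
  classical
  set Q := MonoidAlgebra ℤ M ⧸ augIdeal M ^ (n + 1) with hQdef
  set R := MonoidAlgebra ℤ G ⧸ augIdeal G ^ (n + 1) with hRdef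
  set πM : MonoidAlgebra ℤ M →+* Q := Ideal.Quotient.mk (augIdeal M ^ (n + 1)) with hπM
  set πG : MonoidAlgebra ℤ G →+* R := Ideal.Quotient.mk (augIdeal G ^ (n + 1)) with hπG
  -- map on single
  have hmapd : ∀ (m : M) (r : ℤ),
      (mapDomainRingHom ℤ i) (single m r) = single (i m) r := by
    intro m r
    simp [mapDomainRingHom, Finsupp.mapDomain_single]
  -- the forward map kills the augmentation ideal power
  have haugmap : ∀ x ∈ augIdeal M, (mapDomainRingHom ℤ i) x ∈ augIdeal G := by
    intro x hx
    have key : ((MonoidAlgebra.lift ℤ ℤ G) 1).toRingHom.comp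
        ((mapDomainRingHom ℤ i) : MonoidAlgebra ℤ M →+* MonoidAlgebra ℤ G) =
        ((MonoidAlgebra.lift ℤ ℤ M) 1).toRingHom := by
      apply MonoidAlgebra.ringHom_ext <;> intro a <;>
        simp [hmapd, aug_single]
    have hx0 : (MonoidAlgebra.lift ℤ ℤ M) 1 x = 0 := hx
    have := congrArg (fun f : MonoidAlgebra ℤ M →+* ℤ => f x) key
    simp only [RingHom.coe_comp, Function.comp_apply] at this
    simp only [augIdeal, RingHom.mem_ker]
    rw [show ((MonoidAlgebra.lift ℤ ℤ G) 1) ((mapDomainRingHom ℤ i) x)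
        = ((MonoidAlgebra.lift ℤ ℤ M) 1) x from this, hx0]
  have hkill : ∀ x ∈ augIdeal M ^ (n + 1), (πG.comp (mapDomainRingHom ℤ i)) x = 0 := by
    intro x hx
    have h1 : (mapDomainRingHom ℤ i) x ∈ augIdeal G ^ (n + 1) := by
      have : (mapDomainRingHom ℤ i) x ∈ Ideal.map (mapDomainRingHom ℤ i) (augIdeal M ^ (n + 1)) :=
        Ideal.mem_map_of_mem _ hx
      rw [Ideal.map_pow] at this
      exact Ideal.pow_right_mono
        (Ideal.map_le_iff_le_comap.mpr fun y hy => Ideal.mem_comap.mpr (haugmap y hy)) (n + 1) this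
    show πG ((mapDomainRingHom ℤ i) x) = 0
    exact Ideal.Quotient.eq_zero_iff_mem.mpr h1
  set ψ : Q →+* R := Ideal.Quotient.lift _ (πG.comp (mapDomainRingHom ℤ i)) hkill with hψdef
  have hψcomp : ψ.comp πM = πG.comp (mapDomainRingHom ℤ i) :=
    RingHom.ext fun x => by
      simp only [RingHom.comp_apply]
      exact Ideal.Quotient.lift_mk _ _ _
  have hψ_single : ∀ m : M, ψ (πM (single m 1)) = πG (single (i m) 1) := by
    intro m
    rw [show ψ (πM (single m 1)) = (ψ.comp πM) (single m 1) from rfl, hψcomp]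
    simp [hmapd]
  -- units in Q
  have hnil : ∀ m : M, IsNilpotent (πM ((MonoidAlgebra.of ℤ M) m - 1)) := by
    intro m
    refine ⟨n + 1, ?_⟩
    rw [← map_pow]
    exact Ideal.Quotient.eq_zero_iff_mem.mpr (Ideal.pow_mem_pow (of_sub_one_mem m) (n + 1))
  have hunit : ∀ m : M, IsUnit (πM ((MonoidAlgebra.of ℤ M) m)) := by
    intro m
    have : πM ((MonoidAlgebra.of ℤ M) m) = 1 + πM ((MonoidAlgebra.of ℤ M) m - 1) := by
      rw [map_sub, map_one]; ring
    rw [this]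
    exact (hnil m).isUnit_one_add
  let u : M →* Qˣ :=
    { toFun := fun m => (hunit m).unit
      map_one' := by ext; simp; exact map_one πM
      map_mul' := by
        intro a b
        ext
        show πM (single (a * b) 1) = πM (single a 1) * πM (single b 1)
        rw [← map_mul]
        congr 1
        rw [MonoidAlgebra.single_mul_single, one_mul] }
  have hu : ∀ m : M, ((u m : Qˣ) : Q) = πM ((MonoidAlgebra.of ℤ M) m) := fun m => rfl
  obtain ⟨ψ₀, hψ₀, -⟩ := hi Qˣ u
  have hψ₀i : ∀ m : M, ψ₀ (i m) = u m := fun m => DFunLike.congr_fun hψ₀ m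
  -- J and its power
  set J : Ideal Q := Ideal.map πM (augIdeal M) with hJdef
  have hJpow : J ^ (n + 1) = ⊥ := by
    rw [hJdef, ← Ideal.map_pow, hπM, Ideal.map_quotient_self]
  -- every g satisfies ψ₀ g - 1 ∈ J
  let S : Subgroup G :=
    { carrier := {g | ((ψ₀ g : Qˣ) : Q) - 1 ∈ J}
      one_mem' := by simp
      mul_mem' := by
        intro a b ha hb
        have : ((ψ₀ (a * b) : Qˣ) : Q) - 1
            = ((ψ₀ a : Qˣ) : Q) * (((ψ₀ b : Qˣ) : Q) - 1) + (((ψ₀ a : Qˣ) : Q) - 1) := by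
          rw [map_mul]; push_cast; ring
        show ((ψ₀ (a * b) : Qˣ) : Q) - 1 ∈ J
        rw [this]
        exact J.add_mem (J.mul_mem_left _ hb) ha
      inv_mem' := by
        intro a ha
        have key : ((ψ₀ a⁻¹ : Qˣ) : Q) - 1
            = ((ψ₀ a⁻¹ : Qˣ) : Q) * (1 - ((ψ₀ a : Qˣ) : Q)) := by
          have h2 : ((ψ₀ a⁻¹ : Qˣ) : Q) * ((ψ₀ a : Qˣ) : Q) = 1 := by
            rw [← Units.val_mul, ← map_mul]; simp
          rw [mul_sub, h2, mul_one]
        simp only [Set.mem_setOf_eq] at ha ⊢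
        rw [key]
        exact J.mul_mem_left _ (by simpa using J.neg_mem ha) }
  have hrange : ∀ m : M, i m ∈ S := by
    intro m
    show ((ψ₀ (i m) : Qˣ) : Q) - 1 ∈ J
    rw [hψ₀i m, hu m, show πM ((MonoidAlgebra.of ℤ M) m) - 1
        = πM ((MonoidAlgebra.of ℤ M) m - 1) by rw [map_sub, map_one]]
    exact Ideal.mem_map_of_mem _ (of_sub_one_mem m)
  have hS : ∀ g : G, g ∈ S := by
    intro g
    let i' : M →* S := i.codRestrict S hrange
    obtain ⟨χ, hχ, -⟩ := hi S i'
    obtain ⟨ρ, hρ, hρu⟩ := hi G i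
    have h1 : (S.subtype.comp χ).comp i = i := by
      rw [MonoidHom.comp_assoc, hχ]; rfl
    have h2 : (MonoidHom.id G).comp i = i := by ext; rfl
    have := (hρu _ h1).trans (hρu _ h2).symm
    have hg : S.subtype (χ g) = g := DFunLike.congr_fun this g
    rw [← hg]; exact (χ g).2
  have hker : ∀ g : G, ((ψ₀ g : Qˣ) : Q) - 1 ∈ J := hS
  -- the inverse ring hom
  set φ : MonoidAlgebra ℤ G →+* Q :=
    ((MonoidAlgebra.lift ℤ Q G) ((Units.coeHom Q).comp ψ₀)).toRingHom with hφdef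
  have hφ_single : ∀ (g : G) (r : ℤ), φ (single g r) = r • ((ψ₀ g : Qˣ) : Q) := by
    intro g r
    simp [hφdef, MonoidAlgebra.lift_single]
  have hφaug : ∀ x : MonoidAlgebra ℤ G,
      φ x - algebraMap ℤ Q ((MonoidAlgebra.lift ℤ ℤ G) 1 x) ∈ J := by
    intro x
    induction x using MonoidAlgebra.induction with
    | zero => simp
    | single_add g r f hgf hr ih =>
        have heq : φ (single g r + f)
            - algebraMap ℤ Q ((MonoidAlgebra.lift ℤ ℤ G) 1 (single g r + f))
            = (φ (single g r) - algebraMap ℤ Q ((MonoidAlgebra.lift ℤ ℤ G) 1 (single g r)))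
              + (φ f - algebraMap ℤ Q ((MonoidAlgebra.lift ℤ ℤ G) 1 f)) := by
          simp only [map_add]; ring
        rw [heq]
        refine J.add_mem ?_ ih
        rw [hφ_single, show ((MonoidAlgebra.lift ℤ ℤ G) 1 (single g r)) = r from aug_single g r]
        have : r • ((ψ₀ g : Qˣ) : Q) - algebraMap ℤ Q r
            = r • (((ψ₀ g : Qˣ) : Q) - 1) := by
          rw [smul_sub]
          congr 1
          simp [Algebra.algebraMap_eq_smul_one]
        rw [this, zsmul_eq_mul]
        exact J.mul_mem_left _ (hker g)
  have hφI : ∀ x ∈ augIdeal G, φ x ∈ J := by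
    intro x hx
    have hx0 : (MonoidAlgebra.lift ℤ ℤ G) 1 x = 0 := hx
    have := hφaug x
    rwa [hx0, map_zero, sub_zero] at this
  have hφkill : ∀ x ∈ augIdeal G ^ (n + 1), φ x = 0 := by
    intro x hx
    have h1 : φ x ∈ J ^ (n + 1) := by
      have : φ x ∈ Ideal.map φ (augIdeal G ^ (n + 1)) := Ideal.mem_map_of_mem _ hx
      rw [Ideal.map_pow] at this
      exact Ideal.pow_right_mono
        (Ideal.map_le_iff_le_comap.mpr fun y hy => Ideal.mem_comap.mpr (hφI y hy)) (n + 1) this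
    rw [hJpow] at h1
    exact Ideal.mem_bot.mp h1
  set ψ' : R →+* Q := Ideal.Quotient.lift _ φ hφkill with hψ'def
  have hψ'comp : ∀ x : MonoidAlgebra ℤ G, ψ' (πG x) = φ x :=
    fun x => Ideal.Quotient.lift_mk _ _ _
  -- ring homs agree on ℤ-constants automatically
  have hconst : ∀ (A : Type) [inst : CommRing A] (f : MonoidAlgebra ℤ G →+* A) (b : ℤ),
      f (single 1 b) = b • (1 : A) := by
    intro A _ f b
    have : (single 1 b : MonoidAlgebra ℤ G) = b • (1 : MonoidAlgebra ℤ G) := by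
      rw [MonoidAlgebra.one_def]
      ext x
      simp [MonoidAlgebra.smul_single']
    rw [this, map_zsmul]
    simp
  have hconstM : ∀ (A : Type) [inst : CommRing A] (f : MonoidAlgebra ℤ M →+* A) (b : ℤ),
      f (single 1 b) = b • (1 : A) := by
    intro A _ f b
    have : (single 1 b : MonoidAlgebra ℤ M) = b • (1 : MonoidAlgebra ℤ M) := by
      rw [MonoidAlgebra.one_def]
      ext x
      simp [MonoidAlgebra.smul_single']
    rw [this, map_zsmul]
    simp
  -- left inverse : ψ' ∘ ψ = id
  have hL : ∀ q : Q, ψ' (ψ q) = q := by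
    have key : (ψ'.comp ψ).comp πM = πM := by
      apply MonoidAlgebra.ringHom_ext
      · intro b
        rw [hconstM Q ((ψ'.comp ψ).comp πM) b, hconstM Q πM b]
      · intro m
        show ψ' (ψ (πM (single m 1))) = πM (single m 1)
        rw [hψ_single m, hψ'comp, hφ_single, one_smul, hψ₀i m, hu m]
        rfl
    intro q
    obtain ⟨x, rfl⟩ := Ideal.Quotient.mk_surjective q
    exact DFunLike.congr_fun key x
  -- right inverse : ψ ∘ ψ' = id, via uniqueness of the universal property
  have hR2 : ∀ r : R, ψ (ψ' r) = r := by
    have hpoint : ∀ g : G, ψ (((ψ₀ g : Qˣ) : Q)) = πG (single g 1) := by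
      let t : G →* R := (ψ.comp φ).toMonoidHom.comp (MonoidAlgebra.of ℤ G)
      let w : G →* R := πG.toMonoidHom.comp (MonoidAlgebra.of ℤ G)
      have ht : ∀ g, t g = ψ (((ψ₀ g : Qˣ) : Q)) := by
        intro g
        show ψ (φ ((MonoidAlgebra.of ℤ G) g)) = _
        rw [show ((MonoidAlgebra.of ℤ G) g) = single g 1 from rfl, hφ_single, one_smul]
      have hw : ∀ g, w g = πG (single g 1) := fun g => rfl
      have hagree : t.toHomUnits.comp i = w.toHomUnits.comp i := by
        ext m
        show ((t.toHomUnits (i m) : Rˣ) : R) = ((w.toHomUnits (i m) : Rˣ) : R)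
        rw [MonoidHom.coe_toHomUnits, MonoidHom.coe_toHomUnits]
        rw [ht, hw, hψ₀i m, hu m]
        exact hψ_single m
      obtain ⟨ρ, hρ, hρu⟩ := hi Rˣ (w.toHomUnits.comp i)
      have heq : t.toHomUnits = w.toHomUnits :=
        (hρu _ hagree).trans (hρu _ rfl).symm
      intro g
      have := congrArg (fun f : G →* Rˣ => ((f g : Rˣ) : R)) heq
      simpa [MonoidHom.coe_toHomUnits, ht, hw] using this
    have key : (ψ.comp ψ').comp πG = πG := by
      apply MonoidAlgebra.ringHom_ext
      · intro b
        rw [hconst R ((ψ.comp ψ').comp πG) b, hconst R πG b]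
      · intro g
        show ψ (ψ' (πG (single g 1))) = πG (single g 1)
        rw [hψ'comp, hφ_single, one_smul]
        exact hpoint g
    intro r
    obtain ⟨x, rfl⟩ := Ideal.Quotient.mk_surjective r
    exact DFunLike.congr_fun key x
  exact ⟨ψ, hψcomp, Function.LeftInverse.injective hL, Function.RightInverse.surjective hR2⟩
end

section
/- Let f: A → A' be a polynomial map between abelian groups and M ⊆ A a submonoid such that f(x + m) = f(x) for all x ∈ A and m ∈ M. Then f(x + m') = f(x) for all x ∈ A and all m' in the subgroup M' of A generated by M, so f factors through A/M'. -/
/-- `PolyDeg n f` means that `f` is polynomial of degree `≤ n - 1`;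
`PolyDeg 0 f` means `f` is identically zero (degree `≤ -1`),
and `PolyDeg (n+1) f` means `f` is polynomial of degree `≤ n`. -/
def PolyDeg {M A : Type*} [AddCommMonoid M] [AddCommGroup A] : ℕ → (M → A) → Prop
  | 0, f => ∀ x, f x = 0
  | n + 1, f => ∀ y : M, PolyDeg n fun x => f (x + y) - f x

/-- If `f : A → A'` is a polynomial map between abelian groups which is invariant under
translation by elements of a submonoid `M ⊆ A`, then `f` is invariant under translation by
every element of the subgroup `M'` generated by `M`, and `f` factors through `A / M'`. -/
theorem polyDeg_invariant_subgroup {A A' : Type*} [AddCommGroup A] [AddCommGroup A']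
    (f : A → A') (hf : ∃ n, PolyDeg n f) (M : AddSubmonoid A)
    (h : ∀ x : A, ∀ m ∈ M, f (x + m) = f x) :
    (∀ x : A, ∀ m' ∈ AddSubgroup.closure (M : Set A), f (x + m') = f x) ∧
      ∃ g : A ⧸ AddSubgroup.closure (M : Set A) → A',
        f = g ∘ (QuotientAddGroup.mk : A → A ⧸ AddSubgroup.closure (M : Set A)) := by
  have key : ∀ m' ∈ AddSubgroup.closure (M : Set A), ∀ x, f (x + m') = f x := by
    intro m' hm'
    induction hm' using AddSubgroup.closure_induction with
    | mem m hm => exact fun x => h x m hm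
    | zero => intro x; simp
    | add a b _ _ ha hb => intro x; rw [← add_assoc, hb, ha]
    | neg a _ ha => intro x; have := ha (x + -a); simpa using this.symm
  refine ⟨fun x m' hm' => key m' hm' x, ?_⟩
  refine ⟨fun q => Quotient.liftOn q f ?_, ?_⟩
  · intro a b hab
    have hab' : -a + b ∈ AddSubgroup.closure (M : Set A) :=
      (QuotientAddGroup.leftRel_apply).mp hab
    have := key _ hab' a
    simpa using this.symm
  · rfl
end

section
/- If f: A → B is a polynomial map of abelian groups of degree ≤ m and g: B → C is a polynomial map of degree ≤ n, then the composite g ∘ f: A → C is polynomial of degree ≤ mn. -/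
section aux
variable {M A : Type*} [AddCommMonoid M] [AddCommGroup A]

theorem polyDeg_succ : ∀ {n : ℕ} {f : M → A}, PolyDeg n f → PolyDeg (n+1) f := by
  intro n
  induction n with
  | zero =>
    intro f h y x
    have h' : ∀ x, f x = 0 := h
    simp [h']
  | succ n ih => intro f h y; exact ih (h y)

theorem polyDeg_mono {n k : ℕ} (hnk : n ≤ k) {f : M → A} (h : PolyDeg n f) : PolyDeg k f := by
  induction k with
  | zero => simpa [Nat.le_zero.mp hnk] using h
  | succ k ih =>
    rcases Nat.lt_or_ge n (k+1) with h1 | h1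
    · exact polyDeg_succ (ih (Nat.lt_succ_iff.mp h1))
    · have : n = k + 1 := le_antisymm hnk h1
      simpa [this] using h

/-- the alternating sum of `F` over subset-sums of `z` on `s`. -/
def csum {ι : Type*} [DecidableEq ι] (F : M → A) (s : Finset ι) (z : ι → M) (x : M) : A :=
  ∑ t ∈ s.powerset, (-1 : ℤ)^t.card • F (x + ∑ i ∈ t, z i)

theorem csum_empty {ι : Type*} [DecidableEq ι] (F : M → A) (z : ι → M) (x : M) :
    csum F (∅ : Finset ι) z x = F x := by
  simp [csum]

theorem csum_insert {ι : Type*} [DecidableEq ι] (F : M → A) {s : Finset ι} {a : ι}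
    (ha : a ∉ s) (z : ι → M) (x : M) :
    csum F (insert a s) z x = - csum (fun w => F (w + z a) - F w) s z x := by
  classical
  have hdisj : Disjoint s.powerset (s.powerset.image (insert a)) := by
    rw [Finset.disjoint_left]
    intro t ht ht'
    obtain ⟨t', ht', rfl⟩ := Finset.mem_image.mp ht'
    exact ha (Finset.mem_powerset.mp ht (Finset.mem_insert_self a t'))
  have hinj : ∀ t ∈ s.powerset, ∀ t' ∈ s.powerset, insert a t = insert a t' → t = t' := by
    intro t ht t' ht' h
    have h1 : a ∉ t := fun hh => ha (Finset.mem_powerset.mp ht hh)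
    have h2 : a ∉ t' := fun hh => ha (Finset.mem_powerset.mp ht' hh)
    rw [← Finset.erase_insert h1, ← Finset.erase_insert h2, h]
  rw [csum, Finset.powerset_insert, Finset.sum_union hdisj, Finset.sum_image hinj]
  rw [csum]
  rw [eq_neg_iff_add_eq_zero]
  rw [add_assoc, ← Finset.sum_add_distrib, ← Finset.sum_add_distrib]
  apply Finset.sum_eq_zero
  intro t ht
  have h1 : a ∉ t := fun hh => ha (Finset.mem_powerset.mp ht hh)
  rw [Finset.card_insert_of_notMem h1, Finset.sum_insert h1, pow_succ, smul_sub]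
  have harg : x + (z a + ∑ i ∈ t, z i) = x + ∑ i ∈ t, z i + z a := by
    rw [add_assoc, add_comm (z a)]
  rw [harg]
  simp only [mul_neg_one, neg_smul]
  abel

theorem csum_eq_zero_card {ι : Type*} [DecidableEq ι] {s : Finset ι} :
    ∀ {F : M → A}, PolyDeg s.card F → ∀ (z : ι → M) (x : M), csum F s z x = 0 := by
  classical
  induction s using Finset.induction_on with
  | empty => intro F h z x; rw [csum_empty]; exact h x
  | insert a s ha ih =>
    intro F h z x
    rw [csum_insert F ha z x, ih (by rw [Finset.card_insert_of_notMem ha] at h; exact h (z a)) z x,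
      neg_zero]

theorem csum_eq_zero {ι : Type*} [DecidableEq ι] {n : ℕ} {F : M → A} (h : PolyDeg n F)
    {s : Finset ι} (hs : n ≤ s.card) (z : ι → M) (x : M) : csum F s z x = 0 :=
  csum_eq_zero_card (polyDeg_mono hs h) z x

theorem csum_congr {ι : Type*} [DecidableEq ι] (F : M → A) {s : Finset ι} {z z' : ι → M}
    (h : ∀ i ∈ s, z i = z' i) (x : M) : csum F s z x = csum F s z' x := by
  apply Finset.sum_congr rfl
  intro t ht
  have : ∑ i ∈ t, z i = ∑ i ∈ t, z' i :=
    Finset.sum_congr rfl fun i hi => h i (Finset.mem_powerset.mp ht hi)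
  rw [this]

theorem polyDeg_of_csum : ∀ {n : ℕ} {F : M → A},
    (∀ s : Finset ℕ, s.card = n → ∀ (z : ℕ → M) (x : M), csum F s z x = 0) → PolyDeg n F := by
  intro n
  induction n with
  | zero =>
    intro F h x
    have := h ∅ rfl (fun _ => 0) x
    rwa [csum_empty] at this
  | succ n ih =>
    intro F h y
    apply ih
    intro s hs z x
    have ha : s.sup id + 1 ∉ s := by
      intro hmem
      have := Finset.le_sup (f := id) hmem
      simp only [id] at this
      omega
    set a := s.sup id + 1
    have h2 := h (insert a s) (by rw [Finset.card_insert_of_notMem ha, hs])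
      (Function.update z a y) x
    rw [csum_insert F ha, Function.update_self, neg_eq_zero] at h2
    rw [← h2]
    exact csum_congr _ (fun i hi => by
      rw [Function.update_of_ne (fun hh => ha (by rw [← hh]; exact hi))]) x

theorem interval_alt {ι : Type*} [DecidableEq ι] {w s : Finset ι} (hws : w ⊆ s) :
    ∑ u ∈ s.powerset.filter (fun u => w ⊆ u), (-1:ℤ)^u.card
      = if w = s then (-1:ℤ)^s.card else 0 := by
  classical
  have himg : s.powerset.filter (fun u => w ⊆ u) = ((s \ w).powerset).image (fun v => w ∪ v) := by
    ext u
    simp only [Finset.mem_filter, Finset.mem_powerset, Finset.mem_image]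
    constructor
    · rintro ⟨hus, hwu⟩
      exact ⟨u \ w, Finset.sdiff_subset_sdiff hus (le_refl w), by
        rw [Finset.union_sdiff_of_subset hwu]⟩
    · rintro ⟨v, hv, rfl⟩
      exact ⟨Finset.union_subset hws (hv.trans (Finset.sdiff_subset)),
        Finset.subset_union_left⟩
  have hinj : ∀ v ∈ (s \ w).powerset, ∀ v' ∈ (s \ w).powerset, w ∪ v = w ∪ v' → v = v' := by
    intro v hv v' hv' h
    have d1 : Disjoint w v := (Finset.disjoint_sdiff.mono_right (Finset.mem_powerset.mp hv))
    have d2 : Disjoint w v' := (Finset.disjoint_sdiff.mono_right (Finset.mem_powerset.mp hv'))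
    rw [← Finset.union_sdiff_cancel_left d1, h, Finset.union_sdiff_cancel_left d2]
  rw [himg, Finset.sum_image hinj]
  have : ∀ v ∈ (s \ w).powerset, (-1:ℤ)^(w ∪ v).card = (-1:ℤ)^w.card * (-1:ℤ)^v.card := by
    intro v hv
    have d1 : Disjoint w v := (Finset.disjoint_sdiff.mono_right (Finset.mem_powerset.mp hv))
    rw [Finset.card_union_of_disjoint d1, pow_add]
  rw [Finset.sum_congr rfl this, ← Finset.mul_sum, Finset.sum_powerset_neg_one_pow_card]
  by_cases hws' : w = s
  · have : s \ w = ∅ := by rw [hws']; simp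
    simp [hws', this]
  · have : s \ w ≠ ∅ := by
      intro hh
      exact hws' (le_antisymm hws (Finset.sdiff_eq_empty_iff_subset.mp hh))
    simp [hws', this]

theorem inversion {ι : Type*} [DecidableEq ι] (G : Finset ι → A) (u : Finset ι) :
    ∑ t ∈ u.powerset, (-1:ℤ)^t.card • ∑ w ∈ t.powerset, (-1:ℤ)^w.card • G w = G u := by
  classical
  have swap : ∑ t ∈ u.powerset, ∑ w ∈ t.powerset, ((-1:ℤ)^t.card * (-1:ℤ)^w.card) • G w
      = ∑ w ∈ u.powerset, ∑ t ∈ u.powerset.filter (fun t => w ⊆ t),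
          ((-1:ℤ)^t.card * (-1:ℤ)^w.card) • G w := by
    rw [Finset.sum_sigma', Finset.sum_sigma']
    apply Finset.sum_nbij' (fun p => ⟨p.2, p.1⟩) (fun p => ⟨p.2, p.1⟩)
    · rintro ⟨t, w⟩ hp
      simp only [Finset.mem_sigma, Finset.mem_powerset, Finset.mem_filter] at hp ⊢
      exact ⟨hp.2.trans hp.1, hp.1, hp.2⟩
    · rintro ⟨w, t⟩ hp
      simp only [Finset.mem_sigma, Finset.mem_powerset, Finset.mem_filter] at hp ⊢
      exact ⟨hp.2.1, hp.2.2⟩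
    · rintro ⟨t, w⟩ _; rfl
    · rintro ⟨w, t⟩ _; rfl
    · rintro ⟨t, w⟩ _; rfl
  calc ∑ t ∈ u.powerset, (-1:ℤ)^t.card • ∑ w ∈ t.powerset, (-1:ℤ)^w.card • G w
      = ∑ t ∈ u.powerset, ∑ w ∈ t.powerset, ((-1:ℤ)^t.card * (-1:ℤ)^w.card) • G w := by
        apply Finset.sum_congr rfl; intro t _
        rw [Finset.smul_sum]
        exact Finset.sum_congr rfl fun w _ => smul_smul _ _ _
    _ = ∑ w ∈ u.powerset, ∑ t ∈ u.powerset.filter (fun t => w ⊆ t),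
          ((-1:ℤ)^t.card * (-1:ℤ)^w.card) • G w := swap
    _ = G u := by
        rw [Finset.sum_eq_single u]
        · have : ∑ t ∈ u.powerset.filter (fun t => u ⊆ t), ((-1:ℤ)^t.card * (-1:ℤ)^u.card) • G u
            = (∑ t ∈ u.powerset.filter (fun t => u ⊆ t), (-1:ℤ)^t.card) • ((-1:ℤ)^u.card • G u) := by
            rw [Finset.sum_smul]
            exact Finset.sum_congr rfl fun t _ => (smul_smul _ _ _).symm
          rw [this, interval_alt (le_refl u), if_pos rfl, smul_smul, ← pow_add,
            Even.neg_one_pow ⟨u.card, by ring⟩, one_smul]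
        · intro w hw hwu
          have : ∑ t ∈ u.powerset.filter (fun t => w ⊆ t), ((-1:ℤ)^t.card * (-1:ℤ)^w.card) • G w
            = (∑ t ∈ u.powerset.filter (fun t => w ⊆ t), (-1:ℤ)^t.card) • ((-1:ℤ)^w.card • G w) := by
            rw [Finset.sum_smul]
            exact Finset.sum_congr rfl fun t _ => (smul_smul _ _ _).symm
          rw [this, interval_alt (Finset.mem_powerset.mp hw), if_neg hwu, zero_smul]
        · intro h; exact absurd (Finset.mem_powerset.mpr (le_refl u)) h

end aux

/-- The composite of a polynomial map of degree `≤ m` with a polynomial map of degree `≤ n`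
is polynomial of degree `≤ m * n`. -/
theorem polyDeg_comp {A B C : Type*} [AddCommGroup A] [AddCommGroup B] [AddCommGroup C]
    (m n : ℕ) (f : A → B) (g : B → C)
    (hf : PolyDeg (m + 1) f) (hg : PolyDeg (n + 1) g) :
    PolyDeg (m * n + 1) (g ∘ f) := by
  classical
  apply polyDeg_of_csum
  intro s hs z x
  set δ : Finset ℕ → B := fun t => (-1:ℤ)^t.card • csum f t z x with hδdef
  have hδ0 : ∀ t : Finset ℕ, m + 1 ≤ t.card → δ t = 0 := by
    intro t ht
    simp only [hδdef]
    rw [csum_eq_zero hf ht, smul_zero]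
  have hGf : ∀ u : Finset ℕ, f (x + ∑ i ∈ u, z i) = ∑ t ∈ u.powerset, δ t := by
    intro u
    rw [← inversion (fun w : Finset ℕ => f (x + ∑ i ∈ w, z i)) u]
    apply Finset.sum_congr rfl
    intro t _
    simp only [hδdef]
    rfl
  set T : Finset (Finset ℕ) := Finset.filter (fun t => t ≠ ∅ ∧ t.card ≤ m) s.powerset with hT
  have hkey : ∀ u ∈ s.powerset,
      f (x + ∑ i ∈ u, z i) = f x + ∑ t ∈ T.filter (fun t => t ⊆ u), δ t := by
    intro u hu
    rw [hGf u]
    have hmem : (∅ : Finset ℕ) ∈ u.powerset := Finset.mem_powerset.mpr (Finset.empty_subset u)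
    rw [← Finset.add_sum_erase _ δ hmem]
    congr 1
    · simp [hδdef, csum_empty]
    · symm
      apply Finset.sum_subset
      · intro t ht
        simp only [hT, Finset.mem_filter, Finset.mem_powerset] at ht
        rw [Finset.mem_erase, Finset.mem_powerset]
        exact ⟨ht.1.2.1, ht.2⟩
      · intro t ht hnt
        rw [Finset.mem_erase, Finset.mem_powerset] at ht
        apply hδ0
        by_contra hcard
        push_neg at hcard
        apply hnt
        simp only [hT, Finset.mem_filter, Finset.mem_powerset]
        exact ⟨⟨ht.2.trans (Finset.mem_powerset.mp hu), ht.1, by omega⟩, ht.2⟩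
  set c : Finset (Finset ℕ) → C := fun V => (-1:ℤ)^V.card • csum g V δ (f x) with hc
  have hc0 : ∀ V : Finset (Finset ℕ), n + 1 ≤ V.card → c V = 0 := by
    intro V hV
    simp only [hc]
    rw [csum_eq_zero hg hV, smul_zero]
  have hinv : ∀ U : Finset (Finset ℕ),
      g (f x + ∑ t ∈ U, δ t) = ∑ V ∈ U.powerset, c V := by
    intro U
    rw [← inversion (fun W : Finset (Finset ℕ) => g (f x + ∑ t ∈ W, δ t)) U]
    apply Finset.sum_congr rfl
    intro V _
    simp only [hc]
    rfl
  have hpow : ∀ u : Finset ℕ, (T.filter (fun t => t ⊆ u)).powerset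
      = T.powerset.filter (fun V => V.sup id ⊆ u) := by
    intro u
    ext V
    simp only [Finset.mem_powerset, Finset.mem_filter]
    constructor
    · intro h
      constructor
      · intro t ht
        exact (Finset.mem_filter.mp (h ht)).1
      · exact Finset.sup_le fun t ht => (Finset.mem_filter.mp (h ht)).2
    · rintro ⟨h1, h2⟩ t ht
      exact Finset.mem_filter.mpr ⟨h1 ht, (Finset.le_sup (f := id) ht).trans h2⟩
  have step1 : csum (g ∘ f) s z x
      = ∑ u ∈ s.powerset, ∑ V ∈ T.powerset.filter (fun V => V.sup id ⊆ u),
          (-1:ℤ)^u.card • c V := by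
    apply Finset.sum_congr rfl
    intro u hu
    rw [Function.comp_apply, hkey u hu, hinv, Finset.smul_sum, hpow u]
  rw [step1]
  have step2 : ∑ u ∈ s.powerset, ∑ V ∈ T.powerset.filter (fun V => V.sup id ⊆ u),
        (-1:ℤ)^u.card • c V
      = ∑ V ∈ T.powerset,
          (∑ u ∈ s.powerset.filter (fun u => V.sup id ⊆ u), (-1:ℤ)^u.card) • c V := by
    calc ∑ u ∈ s.powerset, ∑ V ∈ T.powerset.filter (fun V => V.sup id ⊆ u),
          (-1:ℤ)^u.card • c V
        = ∑ u ∈ s.powerset, ∑ V ∈ T.powerset,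
            if V.sup id ⊆ u then (-1:ℤ)^u.card • c V else 0 :=
          Finset.sum_congr rfl fun u _ => Finset.sum_filter _ _
      _ = ∑ V ∈ T.powerset, ∑ u ∈ s.powerset,
            if V.sup id ⊆ u then (-1:ℤ)^u.card • c V else 0 := Finset.sum_comm
      _ = ∑ V ∈ T.powerset, ∑ u ∈ s.powerset.filter (fun u => V.sup id ⊆ u),
            (-1:ℤ)^u.card • c V :=
          Finset.sum_congr rfl fun V _ => (Finset.sum_filter _ _).symm
      _ = ∑ V ∈ T.powerset,
            (∑ u ∈ s.powerset.filter (fun u => V.sup id ⊆ u), (-1:ℤ)^u.card) • c V :=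
          Finset.sum_congr rfl fun V _ => (Finset.sum_smul).symm
  rw [step2]
  apply Finset.sum_eq_zero
  intro V hV
  by_cases hsup : V.sup id = s
  · have hcV : c V = 0 := by
      apply hc0
      by_contra hlt
      push_neg at hlt
      have h1 : s.card ≤ ∑ t ∈ V, t.card := by
        rw [← hsup]
        calc (V.sup id).card = (V.biUnion id).card := by rw [Finset.sup_eq_biUnion]
          _ ≤ ∑ t ∈ V, (id t).card := Finset.card_biUnion_le
      have h2 : ∑ t ∈ V, t.card ≤ V.card * m := by
        have := Finset.sum_le_card_nsmul V (fun t => t.card) m (fun t ht => by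
          have h3 := Finset.mem_powerset.mp hV ht
          rw [hT, Finset.mem_filter] at h3
          exact h3.2.2)
        simpa [smul_eq_mul] using this
      have h3 : V.card * m ≤ n * m := Nat.mul_le_mul_right m (by omega)
      rw [hs] at h1
      have h4 : n * m = m * n := Nat.mul_comm n m
      omega
    simp [hcV]
  · have hws : V.sup id ⊆ s := Finset.sup_le fun t ht => by
      have h3 := Finset.mem_powerset.mp hV ht
      rw [hT, Finset.mem_filter, Finset.mem_powerset] at h3
      exact h3.1
    rw [interval_alt hws, if_neg hsup, zero_smul]
end

section
/- Let M be a commutative monoid, A an abelian group, and f, g: M → A polynomial maps of degrees ≤ m and ≤ n respectively, valued in a commutative ring A. Then the pointwise product x ↦ f(x)·g(x) is polynomial of degree ≤ m + n. -/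
lemma polyDeg_congr {M A : Type*} [AddCommMonoid M] [AddCommGroup A] {k : ℕ} {f g : M → A}
    (h : ∀ x, f x = g x) (hf : PolyDeg k f) : PolyDeg k g := by
  have : f = g := funext h
  rwa [← this]

lemma polyDeg_zero {M A : Type*} [AddCommMonoid M] [AddCommGroup A] (k : ℕ) :
    PolyDeg k (fun _ : M => (0 : A)) := by
  induction k with
  | zero => intro x; rfl
  | succ k ih => intro y; exact polyDeg_congr (fun x => by simp) ih

lemma polyDeg_add {M A : Type*} [AddCommMonoid M] [AddCommGroup A] :
    ∀ (k : ℕ) (f g : M → A), PolyDeg k f → PolyDeg k g → PolyDeg k (fun x => f x + g x)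
  | 0, f, g, hf, hg => fun x => by
      have h1 : f x = 0 := hf x
      have h2 : g x = 0 := hg x
      simp [h1, h2]
  | k + 1, f, g, hf, hg => fun y =>
      polyDeg_congr (fun x => by beta_reduce; abel) (polyDeg_add k _ _ (hf y) (hg y))

lemma polyDeg_shift {M A : Type*} [AddCommMonoid M] [AddCommGroup A] :
    ∀ (k : ℕ) (f : M → A) (c : M), PolyDeg k f → PolyDeg k (fun x => f (x + c))
  | 0, f, c, hf => fun x => hf (x + c)
  | k + 1, f, c, hf => fun y =>
      polyDeg_congr (fun x => by rw [add_right_comm]) (polyDeg_shift k _ c (hf y))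

lemma polyDeg_mul_aux {M A : Type*} [AddCommMonoid M] [CommRing A] (k : ℕ) :
    ∀ (m n : ℕ) (f g : M → A), m + n ≤ k → PolyDeg (m + 1) f → PolyDeg (n + 1) g →
      PolyDeg (m + n + 1) (fun x => f x * g x) := by
  induction k with
  | zero =>
    intro m n f g hmn hf hg y
    obtain ⟨rfl, rfl⟩ : m = 0 ∧ n = 0 := by omega
    intro x
    have h1 : f (x + y) - f x = 0 := hf y x
    have h2 : g (x + y) - g x = 0 := hg y x
    have e1 : f (x + y) = f x := by linear_combination h1
    have e2 : g (x + y) = g x := by linear_combination h2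
    show f (x + y) * g (x + y) - f x * g x = 0
    rw [e1, e2, sub_self]
  | succ k ih =>
    intro m n f g hmn hf hg y
    have key : ∀ x : M, (f (x + y) - f x) * g (x + y) + f x * (g (x + y) - g x)
        = f (x + y) * g (x + y) - f x * g x := fun x => by ring
    refine polyDeg_congr (fun x => key x) (polyDeg_add _ _ _ ?_ ?_)
    · -- PolyDeg (m + n) (fun x => (f (x+y) - f x) * g (x + y))
      rcases m with _ | m'
      · exact polyDeg_congr (fun x => by simp [hf y x]) (polyDeg_zero _)
      · have h := ih m' n (fun x => f (x + y) - f x) (fun x => g (x + y))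
          (by omega) (hf y) (polyDeg_shift _ g y hg)
        have e : m' + n + 1 = m' + 1 + n := by omega
        rwa [e] at h
    · -- PolyDeg (m + n) (fun x => f x * (g (x+y) - g x))
      rcases n with _ | n'
      · exact polyDeg_congr (fun x => by simp [hg y x]) (polyDeg_zero _)
      · have h := ih m n' f (fun x => g (x + y) - g x) (by omega) hf (hg y)
        have e : m + n' + 1 = m + (n' + 1) := by omega
        rwa [e] at h

/-- If `f, g : M → A` are polynomial maps of degrees `≤ m` and `≤ n` into a commutative ring `A`,
then the pointwise product `x ↦ f x * g x` is polynomial of degree `≤ m + n`. -/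
theorem polyDeg_mul {M A : Type*} [AddCommMonoid M] [CommRing A]
    (m n : ℕ) (f g : M → A) (hf : PolyDeg (m + 1) f) (hg : PolyDeg (n + 1) g) :
    PolyDeg (m + n + 1) (fun x => f x * g x) := by
  exact polyDeg_mul_aux (m + n) m n f g le_rfl hf hg
end
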